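/- Let X be a compact metric space and let γ = (γ_1, …, γ_N) be an iterated function system on X such that every γ_k is a topological embedding. Assume there exists a dense open subset U of X such that γ_1(U), …, γ_N(U) are pairwise disjoint open subsets of X contained in U. Then there exists a subset 𝕏 of X such that: (1) 𝕏 is dense in X and completely invariant under γ; (2) the images γ_1(𝕏), …, γ_N(𝕏) are pairwise disjoint; (3) each restriction γ_k|_𝕏 is injective; (4) 𝕏 ⊆ U; and (5) 𝕏 is comeager in X. -/

import Mathlib

/-- A subset `S` of `X` is completely invariant under the iterated function system `γ`
if `γ k '' S ⊆ S` and `γ k ⁻¹' S ⊆ S` for every index `k`. -/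
def CompletelyInvariant {X : Type*} {N : ℕ} (γ : Fin N → X → X) (S : Set X) : Prop :=
  ∀ k : Fin N, γ k '' S ⊆ S ∧ γ k ⁻¹' S ⊆ S

/-- Lemma 6.1.1: if `γ` is an iterated function system of embeddings of a compact metric
space satisfying the open set condition (witnessed by `U`), then there is a dense, comeager,
completely `γ`-invariant subset `𝕏 ⊆ U` whose images `γ_1(𝕏), …, γ_N(𝕏)` are pairwise
disjoint and on which every `γ_k` is injective. -/
theorem exists_good_invariant_subset {X : Type*} [MetricSpace X] [CompactSpace X]
    {N : ℕ} (γ : Fin N → X → X) (hemb : ∀ k, Topology.IsEmbedding (γ k))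
    (U : Set X) (hUopen : IsOpen U) (hUdense : Dense U)
    (himgopen : ∀ k : Fin N, IsOpen (γ k '' U))
    (hUdisj : ∀ j k : Fin N, j ≠ k → Disjoint (γ j '' U) (γ k '' U))
    (hUsub : ∀ k : Fin N, γ k '' U ⊆ U) :
    ∃ 𝕏 : Set X, Dense 𝕏 ∧ CompletelyInvariant γ 𝕏 ∧
      (∀ j k : Fin N, j ≠ k → Disjoint (γ j '' 𝕏) (γ k '' 𝕏)) ∧
      (∀ k : Fin N, Set.InjOn (γ k) 𝕏) ∧
      𝕏 ⊆ U ∧ IsMeagre 𝕏ᶜ := by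
  classical
  -- elementary step applied to a set
  set F : (Fin N ⊕ Fin N) → Set X → Set X := fun a S =>
    match a with
    | .inl k => γ k '' S
    | .inr k => γ k ⁻¹' S with hF
  -- sets indexed by words
  set B : List (Fin N ⊕ Fin N) → Set X := fun w => w.foldr F Uᶜ with hB
  have hBnil : B [] = Uᶜ := rfl
  have hBconsl : ∀ (k) (w), B (.inl k :: w) = γ k '' B w := fun _ _ => rfl
  have hBconsr : ∀ (k) (w), B (.inr k :: w) = γ k ⁻¹' B w := fun _ _ => rfl
  -- each `B w` is closed with empty interior
  have key : ∀ w, IsClosed (B w) ∧ interior (B w) = ∅ := by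
    intro w
    induction w with
    | nil =>
      refine ⟨hUopen.isClosed_compl, ?_⟩
      rw [hBnil, interior_eq_empty_iff_dense_compl, compl_compl]; exact hUdense
    | cons a w ih =>
      obtain ⟨hcl, hint⟩ := ih
      match a with
      | .inl k =>
        rw [hBconsl]
        constructor
        · exact (hcl.isCompact.image (hemb k).continuous).isClosed
        · by_contra h
          obtain ⟨x, hx⟩ := Set.nonempty_iff_ne_empty.mpr h
          have hxm : x ∈ γ k '' B w := interior_subset hx
          obtain ⟨y, hy, rfl⟩ := hxm
          have hyW : y ∈ γ k ⁻¹' interior (γ k '' B w) := hx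
          have hWopen : IsOpen (γ k ⁻¹' interior (γ k '' B w)) :=
            isOpen_interior.preimage (hemb k).continuous
          have hWsub : γ k ⁻¹' interior (γ k '' B w) ⊆ B w := by
            intro z hz
            obtain ⟨z', hz', hzz⟩ := interior_subset hz
            rwa [← (hemb k).injective hzz]
          have : y ∈ interior (B w) := (hWopen.subset_interior_iff.mpr hWsub) hyW
          rw [hint] at this; exact this
      | .inr k =>
        rw [hBconsr]
        constructor
        · exact hcl.preimage (hemb k).continuous
        · by_contra h
          obtain ⟨x, hx⟩ := Set.nonempty_iff_ne_empty.mpr h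
          set W : Set X := interior (γ k ⁻¹' B w) ∩ U with hWdef
          have hWopen : IsOpen W := isOpen_interior.inter hUopen
          have hWne : W.Nonempty := by
            have := hUdense.inter_open_nonempty _ isOpen_interior ⟨x, hx⟩
            exact this.imp fun z hz => ⟨hz.1, hz.2⟩
          obtain ⟨T, hTopen, hTpre⟩ := ((hemb k).toIsInducing.isOpen_iff).mp hWopen
          have h1 : γ k '' W = T ∩ Set.range (γ k) := by
            rw [← hTpre, Set.image_preimage_eq_inter_range]
          have himg : γ k '' W = T ∩ γ k '' U := by
            apply subset_antisymm
            · exact Set.subset_inter (h1.le.trans Set.inter_subset_left)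
                (Set.image_mono Set.inter_subset_right)
            · intro z hz
              rw [h1]
              exact ⟨hz.1, Set.image_subset_range _ _ hz.2⟩
          have hopen : IsOpen (γ k '' W) := himg ▸ hTopen.inter (himgopen k)
          have hsub : γ k '' W ⊆ B w := by
            rintro _ ⟨z, hz, rfl⟩
            exact (interior_subset hz.1 : z ∈ γ k ⁻¹' B w)
          have : γ k '' W ⊆ interior (B w) := hopen.subset_interior_iff.mpr hsub
          obtain ⟨z, hz⟩ := hWne
          have := this ⟨z, hz, rfl⟩
          rw [hint] at this; exact this
  -- the good set
  refine ⟨(⋃ w, B w)ᶜ, ?_, ?_, ?_, ?_, ?_, ?_⟩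
  · -- Dense
    have hM : IsMeagre (⋃ w, B w) := by
      rw [isMeagre_iff_countable_union_isNowhereDense]
      refine ⟨Set.range B, ?_, Set.countable_range _, ?_⟩
      · rintro t ⟨w, rfl⟩
        exact ((key w).1.isNowhereDense_iff).mpr (key w).2
      · rw [Set.sUnion_range]
    exact dense_of_mem_residual hM
  · -- completely invariant
    intro k
    constructor
    · rintro _ ⟨x, hx, rfl⟩ hmem
      apply hx
      simp only [Set.mem_iUnion] at hmem ⊢
      obtain ⟨w, hw⟩ := hmem
      exact ⟨.inr k :: w, by rw [hBconsr]; exact hw⟩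
    · intro x hx hmem
      apply hx
      simp only [Set.mem_preimage, Set.mem_compl_iff, Set.mem_iUnion] at hmem ⊢
      obtain ⟨w, hw⟩ := hmem
      exact ⟨.inl k :: w, by rw [hBconsl]; exact ⟨x, hw, rfl⟩⟩
  · -- disjoint images
    intro j k hjk
    have hXU : (⋃ w, B w)ᶜ ⊆ U := by
      intro x hx
      by_contra hxU
      exact hx (Set.mem_iUnion.mpr ⟨[], by rw [hBnil]; exact hxU⟩)
    exact (hUdisj j k hjk).mono (Set.image_mono hXU) (Set.image_mono hXU)
  · -- injectivity
    exact fun k => (hemb k).injective.injOn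
  · -- contained in U
    intro x hx
    by_contra hxU
    exact hx (Set.mem_iUnion.mpr ⟨[], by rw [hBnil]; exact hxU⟩)
  · -- comeager
    rw [compl_compl]
    rw [isMeagre_iff_countable_union_isNowhereDense]
    refine ⟨Set.range B, ?_, Set.countable_range _, ?_⟩
    · rintro t ⟨w, rfl⟩
      exact ((key w).1.isNowhereDense_iff).mpr (key w).2
    · rw [Set.sUnion_range]
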